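/- Let B ⊆ S be a subset of a finite set S with |B| = N, let f : S → ℝ, and let 0 < δ < 1. Suppose B is not δ-stable, meaning: there is no interval I ⊆ ℝ with |{x ∈ B : f(x) ∈ I}| ≥ (1−δ)N and |{x ∈ S \ B : f(x) ∈ I}| ≤ δN. Assume f is injective. Then there exist three pairwise disjoint intervals I₁, I₂, I₃ appearing in this left-to-right order such that |{x ∈ B : f(x) ∈ I₁}| ≥ δN/2, |{x ∈ B : f(x) ∈ I₃}| ≥ δN/2, and |{x ∈ S \ B : f(x) ∈ I₂}| > δN. -/

import Mathlib

open Classical in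
lemma card_filter_le_orderIso {n : ℕ} (T : Finset ℝ) (h : T.card = n) (i : Fin n) :
    (T.filter (fun x => x ≤ (T.orderIsoOfFin h i : ℝ))).card = (i : ℕ) + 1 := by
  classical
  set e := T.orderIsoOfFin h with he
  have him : T.filter (fun x => x ≤ (e i : ℝ)) =
      (Finset.Iic i).image (fun j => (e j : ℝ)) := by
    ext x
    simp only [Finset.mem_filter, Finset.mem_image, Finset.mem_Iic]
    constructor
    · rintro ⟨hx, hle⟩
      refine ⟨e.symm ⟨x, hx⟩, ?_, by simp⟩
      have : e (e.symm ⟨x, hx⟩) ≤ e i := by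
        simp only [OrderIso.apply_symm_apply]
        exact Subtype.coe_le_coe.mp hle
      exact e.le_iff_le.mp this
    · rintro ⟨j, hj, rfl⟩
      exact ⟨(e j).2, Subtype.coe_le_coe.mpr (e.monotone hj)⟩
  rw [him, Finset.card_image_of_injective _
    (fun j k hjk => e.injective (Subtype.val_injective hjk)), Fin.card_Iic]

open Classical in
lemma card_filter_lt_orderIso {n : ℕ} (T : Finset ℝ) (h : T.card = n) (i : Fin n) :
    (T.filter (fun x => x < (T.orderIsoOfFin h i : ℝ))).card = (i : ℕ) := by
  classical
  set e := T.orderIsoOfFin h with he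
  have him : T.filter (fun x => x < (e i : ℝ)) =
      (Finset.Iio i).image (fun j => (e j : ℝ)) := by
    ext x
    simp only [Finset.mem_filter, Finset.mem_image, Finset.mem_Iio]
    constructor
    · rintro ⟨hx, hlt⟩
      refine ⟨e.symm ⟨x, hx⟩, ?_, by simp⟩
      have : e (e.symm ⟨x, hx⟩) < e i := by
        simp only [OrderIso.apply_symm_apply]
        exact Subtype.coe_lt_coe.mp hlt
      exact e.lt_iff_lt.mp this
    · rintro ⟨j, hj, rfl⟩
      exact ⟨(e j).2, Subtype.coe_lt_coe.mpr (e.strictMono hj)⟩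
  rw [him, Finset.card_image_of_injective _
    (fun j k hjk => e.injective (Subtype.val_injective hjk)), Fin.card_Iio]

open Classical in
lemma ncard_sep_eq {α : Type*} (B : Set α) (hB : B.Finite) (f : α → ℝ)
    (hf : Function.Injective f) (I : Set ℝ) :
    {x ∈ B | f x ∈ I}.ncard = ((hB.toFinset.image f).filter (fun v => v ∈ I)).card := by
  classical
  have h1 : {x ∈ B | f x ∈ I} = ↑(hB.toFinset.filter (fun x => f x ∈ I)) := by
    ext x; simp [Set.Finite.mem_toFinset]
  have h2 : (hB.toFinset.image f).filter (fun v => v ∈ I)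
      = (hB.toFinset.filter (fun x => f x ∈ I)).image f := by
    ext v
    simp only [Finset.mem_filter, Finset.mem_image]
    constructor
    · rintro ⟨⟨x, hx, rfl⟩, hv⟩; exact ⟨x, ⟨hx, hv⟩, rfl⟩
    · rintro ⟨x, ⟨hx, hv⟩, rfl⟩; exact ⟨⟨x, hx, rfl⟩, hv⟩
  rw [h1, Set.ncard_coe_finset, h2, Finset.card_image_of_injective _ hf]

/-- Characterization of unstable buckets (Lemma 4.6). -/
theorem unstable_bucket_three_intervals {α : Type*} [Fintype α]
    (B : Set α) (N : ℕ) (hBcard : B.ncard = N)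
    (f : α → ℝ) (hf : Function.Injective f)
    (δ : ℝ) (hδ0 : 0 < δ) (hδ1 : δ < 1) (hN : 1 ≤ δ * N / 2)
    (hunstable : ¬ ∃ I : Set ℝ, I.OrdConnected ∧
      (1 - δ) * N ≤ ({x ∈ B | f x ∈ I}.ncard : ℝ) ∧
      ({x ∈ Bᶜ | f x ∈ I}.ncard : ℝ) ≤ δ * N) :
    ∃ I₁ I₂ I₃ : Set ℝ, I₁.OrdConnected ∧ I₂.OrdConnected ∧ I₃.OrdConnected ∧
      (∀ x ∈ I₁, ∀ y ∈ I₂, x < y) ∧ (∀ x ∈ I₂, ∀ y ∈ I₃, x < y) ∧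
      δ * N / 2 ≤ ({x ∈ B | f x ∈ I₁}.ncard : ℝ) ∧
      δ * N / 2 ≤ ({x ∈ B | f x ∈ I₃}.ncard : ℝ) ∧
      δ * N < ({x ∈ Bᶜ | f x ∈ I₂}.ncard : ℝ) := by
  classical
  have hBfin : B.Finite := Set.toFinite B
  set T : Finset ℝ := hBfin.toFinset.image f with hTdef
  have hTcard : T.card = N := by
    rw [hTdef, Finset.card_image_of_injective _ hf,
      ← Set.ncard_eq_toFinset_card _ hBfin, hBcard]
  have hbridge : ∀ I : Set ℝ,
      {x ∈ B | f x ∈ I}.ncard = (T.filter (fun v => v ∈ I)).card :=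
    fun I => ncard_sep_eq B hBfin f hf I
  have hNpos : 0 < N := by
    rcases Nat.eq_zero_or_pos N with h | h
    · rw [h] at hN; norm_num at hN
    · exact h
  -- B is nonempty
  obtain ⟨b₀, hb₀⟩ : B.Nonempty := Set.nonempty_of_ncard_ne_zero (by omega)
  -- instability implies 1 < (1-δ)N
  have hone : 1 < (1 - δ) * N := by
    by_contra hcon
    push_neg at hcon
    apply hunstable
    refine ⟨{f b₀}, Set.ordConnected_singleton, ?_, ?_⟩
    · have h1 : {x ∈ B | f x ∈ ({f b₀} : Set ℝ)} = {b₀} := by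
        ext x
        simp only [Set.mem_setOf_eq, Set.mem_singleton_iff]
        constructor
        · rintro ⟨_, hfx⟩; exact hf hfx
        · rintro rfl; exact ⟨hb₀, rfl⟩
      rw [h1, Set.ncard_singleton]
      exact_mod_cast hcon
    · have h2 : {x ∈ Bᶜ | f x ∈ ({f b₀} : Set ℝ)} = ∅ := by
        ext x
        simp only [Set.mem_setOf_eq, Set.mem_singleton_iff, Set.mem_empty_iff_false,
          iff_false, not_and, Set.mem_compl_iff]
        intro hx hfx
        exact hx (hf hfx ▸ hb₀)
      rw [h2, Set.ncard_empty]
      push_cast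
      positivity
  set m : ℕ := ⌈δ * N / 2⌉₊ with hm
  have hm1 : 1 ≤ m := by
    have : (1 : ℝ) ≤ m := le_trans hN (Nat.le_ceil _)
    exact_mod_cast this
  have hmlt : (m : ℝ) < δ * N / 2 + 1 := Nat.ceil_lt_add_one (by positivity)
  have h2mR : (2 * m : ℝ) < N + 1 := by nlinarith
  have h2m : 2 * m ≤ N := by
    have : 2 * m < N + 1 := by exact_mod_cast h2mR
    omega
  set e := T.orderIsoOfFin hTcard with he
  set i₁ : Fin N := ⟨m - 1, by omega⟩ with hi₁
  set i₂ : Fin N := ⟨N - m, by omega⟩ with hi₂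
  set a : ℝ := (e i₁ : ℝ) with ha
  set b : ℝ := (e i₂ : ℝ) with hb
  have hab : a < b := by
    have h12 : i₁ < i₂ := by
      rw [Fin.lt_def]; simp only [hi₁, hi₂]; omega
    exact Subtype.coe_lt_coe.mpr (e.strictMono h12)
  -- counting
  have hcard_le_a : (T.filter (fun x => x ≤ a)).card = m := by
    have := card_filter_le_orderIso T hTcard i₁
    rw [← he, ← ha] at this
    rw [this]; simp only [hi₁]; omega
  have hcard_lt_a : (T.filter (fun x => x < a)).card = m - 1 := by
    have := card_filter_lt_orderIso T hTcard i₁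
    rw [← he, ← ha] at this
    rw [this]
  have hcard_le_b : (T.filter (fun x => x ≤ b)).card = N - m + 1 := by
    have := card_filter_le_orderIso T hTcard i₂
    rw [← he, ← hb] at this
    rw [this]
  have hcard_lt_b : (T.filter (fun x => x < b)).card = N - m := by
    have := card_filter_lt_orderIso T hTcard i₂
    rw [← he, ← hb] at this
    rw [this]
  -- complements
  have hcard_ge_a : (T.filter (fun x => a ≤ x)).card = N - (m - 1) := by
    have hsum := Finset.card_filter_add_card_filter_not (s := T)
      (fun x => x < a)
    have hco : T.filter (fun x => ¬ x < a) = T.filter (fun x => a ≤ x) :=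
      Finset.filter_congr (fun x _ => by simp [not_lt])
    rw [hco, hcard_lt_a, hTcard] at hsum
    omega
  have hcard_ge_b : (T.filter (fun x => b ≤ x)).card = m := by
    have hsum := Finset.card_filter_add_card_filter_not (s := T)
      (fun x => x < b)
    have hco : T.filter (fun x => ¬ x < b) = T.filter (fun x => b ≤ x) :=
      Finset.filter_congr (fun x _ => by simp [not_lt])
    rw [hco, hcard_lt_b, hTcard] at hsum
    omega
  have hδm : δ * N / 2 ≤ (m : ℝ) := Nat.le_ceil _
  -- a and b are values of f on B
  have haB : ∃ y ∈ B, f y = a := by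
    have : a ∈ T := (e i₁).2
    rw [hTdef, Finset.mem_image] at this
    obtain ⟨y, hy, hfy⟩ := this
    exact ⟨y, (Set.Finite.mem_toFinset hBfin).mp hy, hfy⟩
  have hbB : ∃ y ∈ B, f y = b := by
    have : b ∈ T := (e i₂).2
    rw [hTdef, Finset.mem_image] at this
    obtain ⟨y, hy, hfy⟩ := this
    exact ⟨y, (Set.Finite.mem_toFinset hBfin).mp hy, hfy⟩
  refine ⟨Set.Iic a, Set.Ioo a b, Set.Ici b, Set.ordConnected_Iic, Set.ordConnected_Ioo,
    Set.ordConnected_Ici, ?_, ?_, ?_, ?_, ?_⟩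
  · intro x hx y hy
    exact lt_of_le_of_lt hx hy.1
  · intro x hx y hy
    exact lt_of_lt_of_le hx.2 hy
  · -- left interval
    rw [hbridge]
    have : @Finset.filter ℝ (fun v => v ∈ Set.Iic a)
        (fun v => Classical.propDecidable _) T = T.filter (fun x => x ≤ a) :=
      Finset.filter_congr (fun x _ => by simp [Set.mem_Iic])
    rw [this, hcard_le_a]
    exact hδm
  · -- right interval
    rw [hbridge]
    have : @Finset.filter ℝ (fun v => v ∈ Set.Ici b)
        (fun v => Classical.propDecidable _) T = T.filter (fun x => b ≤ x) :=
      Finset.filter_congr (fun x _ => by simp [Set.mem_Ici])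
    rw [this, hcard_ge_b]
    exact hδm
  · -- middle interval
    -- first: B-count in Icc a b is large
    have hmidB : (1 - δ) * N ≤ ({x ∈ B | f x ∈ Set.Icc a b}.ncard : ℝ) := by
      rw [hbridge]
      have hsplit : @Finset.filter ℝ (fun v => v ∈ Set.Icc a b)
          (fun v => Classical.propDecidable _) T
          = T.filter (fun x => a ≤ x) ∩ T.filter (fun x => x ≤ b) := by
        ext x
        simp only [Finset.mem_filter, Finset.mem_inter, Set.mem_Icc]
        tauto
      have hunion : (T.filter (fun x => a ≤ x) ∪ T.filter (fun x => x ≤ b)).card ≤ N := by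
        rw [← hTcard]
        exact Finset.card_le_card (Finset.union_subset (Finset.filter_subset _ _)
          (Finset.filter_subset _ _))
      have hie := Finset.card_union_add_card_inter (T.filter (fun x => a ≤ x))
        (T.filter (fun x => x ≤ b))
      rw [hcard_ge_a, hcard_le_b] at hie
      rw [hsplit]
      have hnat : N + 2 ≤ (T.filter (fun x => a ≤ x) ∩ T.filter (fun x => x ≤ b)).card
          + 2 * m := by omega
      have hR : (N : ℝ) + 2 ≤
          ((T.filter (fun x => a ≤ x) ∩ T.filter (fun x => x ≤ b)).card : ℝ) + 2 * m := by
        exact_mod_cast hnat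
      linarith
    have hIcc : δ * N < ({x ∈ Bᶜ | f x ∈ Set.Icc a b}.ncard : ℝ) := by
      by_contra hcon
      push_neg at hcon
      exact hunstable ⟨Set.Icc a b, Set.ordConnected_Icc, hmidB, hcon⟩
    have heq : {x ∈ Bᶜ | f x ∈ Set.Icc a b} = {x ∈ Bᶜ | f x ∈ Set.Ioo a b} := by
      ext x
      simp only [Set.mem_setOf_eq, Set.mem_Icc, Set.mem_Ioo, Set.mem_compl_iff]
      constructor
      · rintro ⟨hx, h1, h2⟩
        refine ⟨hx, lt_of_le_of_ne h1 ?_, lt_of_le_of_ne h2 ?_⟩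
        · intro hax
          obtain ⟨y, hyB, hfy⟩ := haB
          exact hx (hf (hfy.trans hax) ▸ hyB)
        · intro hxb
          obtain ⟨y, hyB, hfy⟩ := hbB
          exact hx (hf (hxb.trans hfy.symm) ▸ hyB)
      · rintro ⟨hx, h1, h2⟩
        exact ⟨hx, le_of_lt h1, le_of_lt h2⟩
    rw [← heq]
    exact hIcc
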